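/- Let σ > 0, ε ∈ ℝ, z ∈ ℝ, and let μ_x, μ̂ be real numbers with μ̂ ≥ μ_x − ε. Set Δ_C := ε + σ·z/√n for a natural number n ≥ 1, and let X_1, …, X_n be independent real random variables on a probability space (Ω, P), each with law gaussianReal μ_x σ². Then the false-alarm probability satisfies P( (1/n)·Σ_{i=1}^n X_i ≥ μ̂ + Δ_C ) ≤ 1 − Φ(z), where Φ is the cumulative distribution function of gaussianReal 0 1. -/

import Mathlib

open MeasureTheory ProbabilityTheory Real
open scoped NNReal ENNReal

lemma gaussianPDFReal_conv (m1 m2 : ℝ) (v1 v2 : ℝ≥0) (hv1 : v1 ≠ 0) (hv2 : v2 ≠ 0) (y : ℝ) :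
    ∫ x, gaussianPDFReal m1 v1 x * gaussianPDFReal m2 v2 (y - x)
      = gaussianPDFReal (m1 + m2) (v1 + v2) y := by
  have ha : (0:ℝ) < v1 := by positivity
  have hb : (0:ℝ) < v2 := by positivity
  set a : ℝ := (v1 : ℝ)
  set b : ℝ := (v2 : ℝ)
  have hab : (0:ℝ) < a + b := by positivity
  simp only [gaussianPDFReal]
  -- pull out constants
  have h1 : ∀ x : ℝ,
      (√(2 * π * v1))⁻¹ * rexp (-(x - m1) ^ 2 / (2 * v1)) *
        ((√(2 * π * v2))⁻¹ * rexp (-(y - x - m2) ^ 2 / (2 * v2)))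
      = ((√(2 * π * a))⁻¹ * (√(2 * π * b))⁻¹) *
          rexp (-(x - m1) ^ 2 / (2 * a) + -(y - x - m2) ^ 2 / (2 * b)) := by
    intro x
    rw [Real.exp_add]
    ring
  rw [MeasureTheory.integral_congr_ae (Filter.Eventually.of_forall h1),
    MeasureTheory.integral_const_mul]
  -- substitute x ↦ x + m1
  have h2 : ∫ x, rexp (-(x - m1) ^ 2 / (2 * a) + -(y - x - m2) ^ 2 / (2 * b))
      = ∫ x, rexp (-x ^ 2 / (2 * a) + -((y - m1 - m2) - x) ^ 2 / (2 * b)) := by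
    have := MeasureTheory.integral_sub_right_eq_self (μ := volume)
      (fun x => rexp (-x ^ 2 / (2 * a) + -((y - m1 - m2) - x) ^ 2 / (2 * b))) m1
    rw [← this]
    congr 1 with x
    congr 2; ring
  rw [h2]
  set t : ℝ := y - m1 - m2 with ht
  -- complete the square
  have h3 : ∀ x : ℝ, -x ^ 2 / (2 * a) + -(t - x) ^ 2 / (2 * b)
      = -((a + b) / (2 * a * b)) * (x - a * t / (a + b)) ^ 2 + (-t ^ 2 / (2 * (a + b))) := by
    intro x
    field_simp
    ring
  simp_rw [h3, Real.exp_add, MeasureTheory.integral_mul_const]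
  have h4 : ∫ x, rexp (-((a + b) / (2 * a * b)) * (x - a * t / (a + b)) ^ 2)
      = √(π / ((a + b) / (2 * a * b))) := by
    exact (MeasureTheory.integral_sub_right_eq_self (μ := volume)
      (fun x => rexp (-((a + b) / (2 * a * b)) * x ^ 2)) (a * t / (a + b))).trans
      (integral_gaussian _)
  rw [h4]
  -- now constants
  have hy : y - (m1 + m2) = t := by rw [ht]; ring
  rw [hy]
  have hc : (√(2 * π * a))⁻¹ * (√(2 * π * b))⁻¹ * √(π / ((a + b) / (2 * a * b)))
      = (√(2 * π * ((v1 : ℝ) + (v2 : ℝ))))⁻¹ := by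
    rw [← Real.sqrt_inv, ← Real.sqrt_inv, ← Real.sqrt_mul (by positivity),
      ← Real.sqrt_mul (by positivity)]
    field_simp
    rw [← Real.sqrt_mul' _ (by positivity : (0:ℝ) ≤ 2 * π * ((v1 : ℝ) + (v2 : ℝ)))]
    show √(1 / (2 * π * (a + b)) * (2 * π * (a + b))) = 1
    rw [one_div, inv_mul_cancel₀ (mul_pos (mul_pos two_pos Real.pi_pos) hab).ne', Real.sqrt_one]
  rw [show ((v1 + v2 : ℝ≥0) : ℝ) = (v1 : ℝ) + (v2 : ℝ) by push_cast; ring, ← hc]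
  ring

lemma gaussianPDFReal_le (μ : ℝ) (v : ℝ≥0) (x : ℝ) :
    gaussianPDFReal μ v x ≤ (√(2 * π * v))⁻¹ := by
  rw [gaussianPDFReal]
  have h1 : rexp (-(x - μ) ^ 2 / (2 * v)) ≤ 1 := by
    rw [Real.exp_le_one_iff]
    by_cases hv : v = 0
    · simp [hv]
    · exact div_nonpos_of_nonpos_of_nonneg (neg_nonpos.mpr (sq_nonneg _)) (by positivity)
  exact mul_le_of_le_one_right (by positivity) h1

lemma gaussianReal_conv (m1 m2 : ℝ) (v1 v2 : ℝ≥0) :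
    Measure.map (fun p : ℝ × ℝ => p.1 + p.2) ((gaussianReal m1 v1).prod (gaussianReal m2 v2))
      = gaussianReal (m1 + m2) (v1 + v2) := by
  by_cases hv1 : v1 = 0
  · subst hv1
    rw [gaussianReal_zero_var, Measure.dirac_prod,
      Measure.map_map measurable_add (measurable_prodMk_left), zero_add]
    have : ((fun p : ℝ × ℝ => p.1 + p.2) ∘ (Prod.mk m1)) = (fun x => m1 + x) := rfl
    rw [this, gaussianReal_map_const_add, add_comm m2 m1]
  by_cases hv2 : v2 = 0
  · subst hv2
    rw [gaussianReal_zero_var, Measure.prod_dirac,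
      Measure.map_map measurable_add (measurable_prodMk_right), add_zero]
    have : ((fun p : ℝ × ℝ => p.1 + p.2) ∘ (fun x => (x, m2))) = (fun x => x + m2) := rfl
    rw [this, gaussianReal_map_add_const]
  -- main case
  have hv12 : v1 + v2 ≠ 0 := by simp [hv1]
  have hmeas2 : Measurable (fun p : ℝ × ℝ => ENNReal.ofReal (gaussianPDFReal m2 v2 (p.2 - p.1))) :=
    ((measurable_gaussianPDFReal m2 v2).comp (measurable_snd.sub measurable_fst)).ennreal_ofReal
  ext s hs
  rw [Measure.map_apply measurable_add hs, Measure.prod_apply (measurable_add hs)]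
  have hinner : ∀ x : ℝ, (gaussianReal m2 v2) (Prod.mk x ⁻¹' ((fun p : ℝ × ℝ => p.1 + p.2) ⁻¹' s))
      = ∫⁻ y in s, ENNReal.ofReal (gaussianPDFReal m2 v2 (y - x)) := by
    intro x
    have h1 : (Prod.mk x ⁻¹' ((fun p : ℝ × ℝ => p.1 + p.2) ⁻¹' s)) = (fun y => x + y) ⁻¹' s := rfl
    rw [h1, ← Measure.map_apply (measurable_const_add x) hs, gaussianReal_map_const_add,
      gaussianReal_apply _ (by simpa using hv2) s]
    congr 1 with y
    rw [gaussianPDF, ← gaussianPDFReal_sub]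
  simp_rw [hinner]
  rw [gaussianReal_of_var_ne_zero _ hv1,
    lintegral_withDensity_eq_lintegral_mul _ (measurable_gaussianPDF _ _)]
  swap
  · simp_rw [← lintegral_indicator hs]
    exact Measurable.lintegral_prod_right <|
      (hmeas2.indicator (measurable_snd hs))
  have hswap : ∫⁻ x, gaussianPDF m1 v1 x *
        ∫⁻ y in s, ENNReal.ofReal (gaussianPDFReal m2 v2 (y - x))
      = ∫⁻ y in s, ∫⁻ x, gaussianPDF m1 v1 x *
        ENNReal.ofReal (gaussianPDFReal m2 v2 (y - x)) := by
    have hm : ∀ x : ℝ, Measurable (fun y => ENNReal.ofReal (gaussianPDFReal m2 v2 (y - x))) :=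
      fun x => ((measurable_gaussianPDFReal m2 v2).comp (measurable_id.sub measurable_const)).ennreal_ofReal
    simp_rw [fun x => (lintegral_const_mul (μ := volume.restrict s)
      (gaussianPDF m1 v1 x) (hm x)).symm]
    exact lintegral_lintegral_swap
      (((measurable_gaussianPDF m1 v1).comp measurable_fst |>.mul hmeas2).aemeasurable)
  simp only [Pi.mul_apply]
  rw [hswap, gaussianReal_apply _ hv12 s]
  apply setLIntegral_congr_fun hs
  intro y _
  have hint : Integrable (fun x => gaussianPDFReal m1 v1 x * gaussianPDFReal m2 v2 (y - x)) := by
    have := (integrable_gaussianPDFReal m1 v1).bdd_mul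
      (f := fun x => gaussianPDFReal m2 v2 (y - x))
      (((measurable_gaussianPDFReal m2 v2).comp
        (measurable_const.sub measurable_id)).aestronglyMeasurable)
      (c := (√(2 * π * v2))⁻¹) (Filter.Eventually.of_forall fun x => by
        rw [Real.norm_eq_abs, abs_of_nonneg (gaussianPDFReal_nonneg _ _ _)]
        exact gaussianPDFReal_le _ _ _)
    simpa [mul_comm] using this
  calc ∫⁻ x, gaussianPDF m1 v1 x * ENNReal.ofReal (gaussianPDFReal m2 v2 (y - x))
      = ∫⁻ x, ENNReal.ofReal (gaussianPDFReal m1 v1 x * gaussianPDFReal m2 v2 (y - x)) := by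
        congr 1 with x
        rw [gaussianPDF, ← ENNReal.ofReal_mul (gaussianPDFReal_nonneg _ _ _)]
    _ = ENNReal.ofReal (∫ x, gaussianPDFReal m1 v1 x * gaussianPDFReal m2 v2 (y - x)) :=
        (ofReal_integral_eq_lintegral_ofReal hint (Filter.Eventually.of_forall fun x =>
          mul_nonneg (gaussianPDFReal_nonneg _ _ _) (gaussianPDFReal_nonneg _ _ _))).symm
    _ = gaussianPDF (m1 + m2) (v1 + v2) y := by
        rw [gaussianPDFReal_conv m1 m2 v1 v2 hv1 hv2 y, gaussianPDF]

lemma gaussianReal_add_of_indepFun {Ω : Type*} [MeasurableSpace Ω] (P : Measure Ω)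
    [IsProbabilityMeasure P] {X Y : Ω → ℝ} (hX : Measurable X) (hY : Measurable Y)
    (hXY : IndepFun X Y P) {m1 m2 : ℝ} {v1 v2 : ℝ≥0}
    (h1 : Measure.map X P = gaussianReal m1 v1) (h2 : Measure.map Y P = gaussianReal m2 v2) :
    Measure.map (fun ω => X ω + Y ω) P = gaussianReal (m1 + m2) (v1 + v2) := by
  have hpair : Measure.map (fun ω => (X ω, Y ω)) P
      = (Measure.map X P).prod (Measure.map Y P) :=
    (ProbabilityTheory.indepFun_iff_map_prod_eq_prod_map_map hX.aemeasurable
      hY.aemeasurable).mp hXY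
  have : (fun ω => X ω + Y ω) = (fun p : ℝ × ℝ => p.1 + p.2) ∘ (fun ω => (X ω, Y ω)) := rfl
  rw [this, ← Measure.map_map measurable_add (hX.prodMk hY), hpair, h1, h2,
    gaussianReal_conv]

lemma gaussianReal_sum_of_iIndepFun {Ω : Type*} [MeasurableSpace Ω] (P : Measure Ω)
    [IsProbabilityMeasure P] {ι : Type*} {X : ι → Ω → ℝ} (hXmeas : ∀ i, Measurable (X i))
    (hindep : iIndepFun X P) {μx : ℝ} {v : ℝ≥0}
    (hlaw : ∀ i, Measure.map (X i) P = gaussianReal μx v) (s : Finset ι) :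
    Measure.map (fun ω => ∑ i ∈ s, X i ω) P
      = gaussianReal (s.card * μx) (s.card * v) := by
  classical
  induction s using Finset.cons_induction with
  | empty =>
      simp only [Finset.sum_empty, Finset.card_empty, Nat.cast_zero, zero_mul]
      rw [gaussianReal_zero_var, Measure.map_const]
      simp
  | cons i s hi ih =>
      have hsum : (fun ω => ∑ j ∈ Finset.cons i s hi, X j ω)
          = fun ω => (∑ j ∈ s, X j ω) + X i ω := by
        funext ω
        rw [Finset.sum_cons, add_comm]
      rw [hsum]
      have hInd : IndepFun (fun ω => ∑ j ∈ s, X j ω) (X i) P := by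
        have := hindep.indepFun_finsetSum_of_notMem hXmeas hi
        have heq : (∑ j ∈ s, X j) = fun ω => ∑ j ∈ s, X j ω :=
          funext fun ω => Finset.sum_apply ω s X
        rwa [heq] at this
      have hms : Measurable (fun ω => ∑ j ∈ s, X j ω) :=
        Finset.measurable_sum s (fun j _ => hXmeas j)
      rw [gaussianReal_add_of_indepFun P hms (hXmeas i) hInd ih (hlaw i)]
      congr 1
      · push_cast [Finset.card_cons]; ring
      · push_cast [Finset.card_cons]
        rw [add_mul, one_mul]

/-- False-alarm bound. With `μ̂ ≥ μ_x − ε` and threshold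
`Δ_C = ε + σ·z/√n`, for `X_1, …, X_n` i.i.d. with law `gaussianReal μ_x σ²` (`σ > 0`),
`P((1/n) ∑ X_i ≥ μ̂ + Δ_C) ≤ 1 − Φ(z)` where `Φ` is the CDF of `gaussianReal 0 1`. -/
theorem false_alarm_bound
    {Ω : Type*} [MeasurableSpace Ω] (P : Measure Ω) [IsProbabilityMeasure P]
    (σ : ℝ≥0) (hσ : 0 < σ) (ε z μx μhat : ℝ) (hμhat : μx - ε ≤ μhat)
    (n : ℕ) (hn : 1 ≤ n)
    (ΔC : ℝ) (hΔC : ΔC = ε + (σ : ℝ) * z / Real.sqrt n)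
    (X : Fin n → Ω → ℝ) (hXmeas : ∀ i, Measurable (X i))
    (hindep : iIndepFun X P)
    (hlaw : ∀ i, Measure.map (X i) P = gaussianReal μx (σ ^ 2)) :
    (P {ω | μhat + ΔC ≤ (1 / (n : ℝ)) * ∑ i, X i ω}).toReal
      ≤ 1 - cdf (gaussianReal 0 1) z := by
  have hn0 : (0:ℝ) < n := by exact_mod_cast hn
  have hsn : (0:ℝ) < Real.sqrt n := Real.sqrt_pos.mpr hn0
  have hss : Real.sqrt n * Real.sqrt n = (n:ℝ) := Real.mul_self_sqrt (le_of_lt hn0)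
  have hσ0 : (0:ℝ) < (σ:ℝ) := hσ
  set S : Ω → ℝ := fun ω => ∑ i, X i ω with hSdef
  have hSmeas : Measurable S := Finset.measurable_sum _ (fun i _ => hXmeas i)
  have hS : Measure.map S P = gaussianReal (n * μx) ((n : ℝ≥0) * σ ^ 2) := by
    have := gaussianReal_sum_of_iIndepFun P hXmeas hindep hlaw Finset.univ
    simpa [Finset.card_univ] using this
  set c : ℝ := Real.sqrt n * σ with hc
  have hc0 : 0 < c := mul_pos hsn hσ0
  set std : ℝ → ℝ := fun x => c⁻¹ * (x + -((n:ℝ) * μx)) with hstd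
  have hstdmeas : Measurable std :=
    (measurable_id.add_const _).const_mul _
  -- set identification
  have hkey : (n:ℝ) * (μx - ε + ΔC) = n * μx + c * z := by
    rw [hΔC, hc]
    field_simp
    linear_combination (-(↑σ * z)) * hss
  have hsetA : {x : ℝ | (μx - ε) + ΔC ≤ (1 / (n:ℝ)) * x} = std ⁻¹' (Set.Ici z) := by
    ext x
    simp only [Set.mem_setOf_eq, Set.mem_preimage, Set.mem_Ici, hstd, one_div]
    rw [le_inv_mul_iff₀ hn0, le_inv_mul_iff₀ hc0, hkey]
    constructor <;> intro h <;> linarith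
  -- standardization
  have hmap : Measure.map std (gaussianReal ((n:ℝ) * μx) ((n : ℝ≥0) * σ ^ 2))
      = gaussianReal 0 1 := by
    have hcomp : std = (fun y => c⁻¹ * y) ∘ (· + -((n:ℝ) * μx)) := rfl
    rw [hcomp, ← Measure.map_map (measurable_const_mul c⁻¹) (measurable_add_const _),
      gaussianReal_map_add_const, add_neg_cancel, gaussianReal_map_const_mul, mul_zero]
    congr 1
    ext
    push_cast
    rw [hc]
    field_simp
    rw [Real.sq_sqrt (le_of_lt hn0)]
  -- probability computation
  have hsub : {ω | μhat + ΔC ≤ (1 / (n : ℝ)) * S ω}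
      ⊆ {ω | (μx - ε) + ΔC ≤ (1 / (n : ℝ)) * S ω} := by
    intro ω hω
    simp only [Set.mem_setOf_eq] at hω ⊢
    linarith
  have hEeq : {ω | (μx - ε) + ΔC ≤ (1 / (n : ℝ)) * S ω}
      = S ⁻¹' (std ⁻¹' (Set.Ici z)) := by
    rw [← hsetA]; rfl
  have hPE : P {ω | (μx - ε) + ΔC ≤ (1 / (n : ℝ)) * S ω}
      = (gaussianReal 0 1) (Set.Ici z) := by
    rw [hEeq, ← Measure.map_apply hSmeas (hstdmeas measurableSet_Ici), hS,
      ← Measure.map_apply hstdmeas measurableSet_Ici, hmap]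
  -- tail probability
  have hsing : (gaussianReal 0 1) {z} = 0 :=
    gaussianReal_absolutelyContinuous 0 one_ne_zero (volume_singleton)
  have hIci : (gaussianReal 0 1) (Set.Ici z) = (gaussianReal 0 1) (Set.Ioi z) := by
    apply le_antisymm
    · calc (gaussianReal 0 1) (Set.Ici z) ≤ (gaussianReal 0 1) ({z} ∪ Set.Ioi z) := by
            apply measure_mono
            intro x hx
            rcases eq_or_lt_of_le (Set.mem_Ici.mp hx) with h | h
            · exact Or.inl (by simp [h.symm])
            · exact Or.inr h
        _ ≤ (gaussianReal 0 1) {z} + (gaussianReal 0 1) (Set.Ioi z) := measure_union_le _ _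
        _ = (gaussianReal 0 1) (Set.Ioi z) := by rw [hsing, zero_add]
    · exact measure_mono Set.Ioi_subset_Ici_self
  have hIoi : (gaussianReal 0 1) (Set.Ioi z) = 1 - (gaussianReal 0 1) (Set.Iic z) := by
    rw [← Set.compl_Iic, measure_compl measurableSet_Iic (measure_ne_top _ _), measure_univ]
  calc (P {ω | μhat + ΔC ≤ (1 / (n : ℝ)) * S ω}).toReal
      ≤ (P {ω | (μx - ε) + ΔC ≤ (1 / (n : ℝ)) * S ω}).toReal :=
        ENNReal.toReal_mono (measure_ne_top _ _) (measure_mono hsub)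
    _ = ((1 : ℝ≥0∞) - (gaussianReal 0 1) (Set.Iic z)).toReal := by
        rw [hPE, hIci, hIoi]
    _ = 1 - cdf (gaussianReal 0 1) z := by
        rw [ENNReal.toReal_sub_of_le prob_le_one ENNReal.one_ne_top, ENNReal.toReal_one,
          cdf_eq_real, measureReal_def]
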